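/- For every positive-definite Hermitian inner product h on 𝔤^{1,0} and every h-orthonormal basis {X_1,…,X_{r+s}} of 𝔤^{1,0}, the associated Chern-Ricci form satisfies: ρ_C(X,Y) = 0 whenever X ∈ 𝔍 or Y ∈ 𝔍; ρ_C(Z_i, Z̄_j) = 0 for all i ≠ j; and ρ_C(Z_i, Z̄_i) = −√−1·( 1/2 − Σ_{a=1}^{s} Im λ_a(Z_i) ) for every i = 1,…,r. In particular ρ_C does not depend on the choice of the Hermitian metric h. -/

import Mathlib

open Complex

/-- In the semidirect-product setting `𝔤 = 𝔥 ⋉ 𝔍` satisfying (i)–(iv),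
for every positive-definite Hermitian inner product `h` on `𝔤^{1,0}` and every
`h`-orthonormal basis `{X_1,…,X_{r+s}}` of `𝔤^{1,0}`, the Chern-Ricci form satisfies
`ρ_C(X,Y) = 0` whenever `X ∈ 𝔍` or `Y ∈ 𝔍`, `ρ_C(Z_i, Z̄_j) = 0` for `i ≠ j`, and
`ρ_C(Z_i, Z̄_i) = −√−1·(1/2 − Σ_a Im λ_a(Z_i))`; in particular `ρ_C` does not depend on the
choice of `h`. -/
theorem stmt_14 (r s : ℕ) (hr : 1 ≤ r) (hs : 1 ≤ s)
    (L : Type*) [LieRing L] [LieAlgebra ℂ L]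
    (bas : Module.Basis ((Fin r ⊕ Fin r) ⊕ (Fin s ⊕ Fin s)) ℂ L)
    (Z Zb : Fin r → L) (W Wb : Fin s → L)
    (hZ : ∀ k, Z k = bas (Sum.inl (Sum.inl k)))
    (hZb : ∀ k, Zb k = bas (Sum.inl (Sum.inr k)))
    (hW : ∀ a, W a = bas (Sum.inr (Sum.inl a)))
    (hWb : ∀ a, Wb a = bas (Sum.inr (Sum.inr a)))
    -- (i) the structure of 𝔥
    (hZZb : ∀ k l, ⁅Z k, Zb l⁆ = if k = l then (-(I / 2)) • (Z k + Zb k) else 0)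
    (hZZ : ∀ k l, ⁅Z k, Z l⁆ = 0)
    (hZbZb : ∀ k l, ⁅Zb k, Zb l⁆ = 0)
    -- (ii) 𝔍 is an abelian ideal
    (hJabel : ∀ x ∈ Submodule.span ℂ (Set.range W ∪ Set.range Wb),
      ∀ y ∈ Submodule.span ℂ (Set.range W ∪ Set.range Wb), ⁅x, y⁆ = (0 : L))
    (hJideal : ∀ x : L, ∀ y ∈ Submodule.span ℂ (Set.range W ∪ Set.range Wb),
      ⁅x, y⁆ ∈ Submodule.span ℂ (Set.range W ∪ Set.range Wb))
    -- (iii)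
    (hZW : ∀ k a, ⁅Z k, W a⁆ ∈ Submodule.span ℂ (Set.range W))
    (hZbWb : ∀ k a, ⁅Zb k, Wb a⁆ ∈ Submodule.span ℂ (Set.range Wb))
    -- (iv) the weights λ_a (given by their values λ_a(Z_k))
    (lam : Fin s → Fin r → ℂ)
    (hZWb : ∀ k a, ⁅Z k, Wb a⁆ = lam a k • Wb a)
    (hZbW : ∀ k a, ⁅Zb k, W a⁆ = (starRingEnd ℂ (lam a k)) • W a)
    -- the antilinear involution σ
    (σ : L →ₛₗ[starRingEnd ℂ] L)
    (hσinv : ∀ x, σ (σ x) = x)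
    (hσZ : ∀ k, σ (Z k) = Zb k)
    (hσW : ∀ a, σ (W a) = Wb a)
    (hσbr : ∀ x y : L, σ ⁅x, y⁆ = ⁅σ x, σ y⁆)
    -- the positive-definite Hermitian inner product h on 𝔤^{1,0}
    (h : L →ₗ[ℂ] L →ₛₗ[starRingEnd ℂ] ℂ)
    (hherm : ∀ x ∈ Submodule.span ℂ (Set.range Z ∪ Set.range W),
      ∀ y ∈ Submodule.span ℂ (Set.range Z ∪ Set.range W),
        h x y = starRingEnd ℂ (h y x))
    (hposdef : ∀ x ∈ Submodule.span ℂ (Set.range Z ∪ Set.range W), x ≠ 0 →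
      0 < (h x x).re)
    -- the induced fundamental form ω
    (ω : L →ₗ[ℂ] L →ₗ[ℂ] ℂ)
    (hωalt : ∀ x : L, ω x x = 0)
    (hω10 : ∀ x ∈ Submodule.span ℂ (Set.range Z ∪ Set.range W),
      ∀ y ∈ Submodule.span ℂ (Set.range Z ∪ Set.range W), ω x y = 0)
    (hω01 : ∀ x ∈ Submodule.span ℂ (Set.range Zb ∪ Set.range Wb),
      ∀ y ∈ Submodule.span ℂ (Set.range Zb ∪ Set.range Wb), ω x y = 0)
    (hωh : ∀ x ∈ Submodule.span ℂ (Set.range Z ∪ Set.range W),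
      ∀ y ∈ Submodule.span ℂ (Set.range Z ∪ Set.range W), ω x (σ y) = I * h x y)
    -- an h-orthonormal basis of 𝔤^{1,0}
    (n : ℕ) (hn : n = r + s) (Xf : Fin n → L)
    (hXmem : ∀ a, Xf a ∈ Submodule.span ℂ (Set.range Z ∪ Set.range W))
    (hXspan : Submodule.span ℂ (Set.range Xf) =
      Submodule.span ℂ (Set.range Z ∪ Set.range W))
    (hXon : ∀ a b, h (Xf a) (Xf b) = if a = b then 1 else 0)
    -- the (1,0)- and (0,1)-projections
    (p10 p01 : L → L)
    (hp : ∀ v : L, p10 v ∈ Submodule.span ℂ (Set.range Z ∪ Set.range W) ∧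
      p01 v ∈ Submodule.span ℂ (Set.range Zb ∪ Set.range Wb) ∧ p10 v + p01 v = v)
    -- the Chern-Ricci form of h
    (ρC : L → L → ℂ)
    (hρ : ∀ X Y : L, ρC X Y =
      -(∑ a, (ω ⁅p01 ⁅X, Y⁆, Xf a⁆ (σ (Xf a)) + ω ⁅p10 ⁅X, Y⁆, σ (Xf a)⁆ (Xf a)))) :
    (∀ X Y : L, (X ∈ Submodule.span ℂ (Set.range W ∪ Set.range Wb) ∨
      Y ∈ Submodule.span ℂ (Set.range W ∪ Set.range Wb)) → ρC X Y = 0) ∧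
    (∀ i j, i ≠ j → ρC (Z i) (Zb j) = 0) ∧
    (∀ i, ρC (Z i) (Zb i) = -I * ((1 / 2 : ℂ) - ((∑ a, (lam a i).im : ℝ) : ℂ))) := by
  classical
  -- abbreviations
  set V10 := Submodule.span ℂ (Set.range Z ∪ Set.range W) with hV10def
  set V01 := Submodule.span ℂ (Set.range Zb ∪ Set.range Wb) with hV01def
  set J := Submodule.span ℂ (Set.range W ∪ Set.range Wb) with hJdef
  have hZmem : ∀ k, Z k ∈ V10 := fun k => Submodule.subset_span (Or.inl ⟨k, rfl⟩)
  have hWmem : ∀ a, W a ∈ V10 := fun a => Submodule.subset_span (Or.inr ⟨a, rfl⟩)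
  have hZbmem : ∀ k, Zb k ∈ V01 := fun k => Submodule.subset_span (Or.inl ⟨k, rfl⟩)
  have hWbmem : ∀ a, Wb a ∈ V01 := fun a => Submodule.subset_span (Or.inr ⟨a, rfl⟩)
  -- V10 ∩ V01 = 0
  have hr10 : Set.range Z ∪ Set.range W =
      bas '' (Set.range (Sum.inl ∘ Sum.inl) ∪ Set.range (Sum.inr ∘ Sum.inl)) := by
    rw [Set.image_union, ← Set.range_comp, ← Set.range_comp]
    congr 1
    · ext x; constructor
      · rintro ⟨k, rfl⟩; exact ⟨k, (hZ k).symm⟩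
      · rintro ⟨k, rfl⟩; exact ⟨k, hZ k⟩
    · ext x; constructor
      · rintro ⟨a, rfl⟩; exact ⟨a, (hW a).symm⟩
      · rintro ⟨a, rfl⟩; exact ⟨a, hW a⟩
  have hr01 : Set.range Zb ∪ Set.range Wb =
      bas '' (Set.range (Sum.inl ∘ Sum.inr) ∪ Set.range (Sum.inr ∘ Sum.inr)) := by
    rw [Set.image_union, ← Set.range_comp, ← Set.range_comp]
    congr 1
    · ext x; constructor
      · rintro ⟨k, rfl⟩; exact ⟨k, (hZb k).symm⟩
      · rintro ⟨k, rfl⟩; exact ⟨k, hZb k⟩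
    · ext x; constructor
      · rintro ⟨a, rfl⟩; exact ⟨a, (hWb a).symm⟩
      · rintro ⟨a, rfl⟩; exact ⟨a, hWb a⟩
  have hdisj : ∀ x, x ∈ V10 → x ∈ V01 → x = 0 := by
    have hd : Disjoint
        (Set.range ((Sum.inl ∘ Sum.inl : Fin r → (Fin r ⊕ Fin r) ⊕ (Fin s ⊕ Fin s))) ∪
          Set.range ((Sum.inr ∘ Sum.inl : Fin s → (Fin r ⊕ Fin r) ⊕ (Fin s ⊕ Fin s))))
        (Set.range ((Sum.inl ∘ Sum.inr : Fin r → (Fin r ⊕ Fin r) ⊕ (Fin s ⊕ Fin s))) ∪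
          Set.range ((Sum.inr ∘ Sum.inr : Fin s → (Fin r ⊕ Fin r) ⊕ (Fin s ⊕ Fin s)))) := by
      rw [Set.disjoint_left]
      rintro x hx hx'
      rcases hx with ⟨k, rfl⟩ | ⟨a, rfl⟩ <;> rcases hx' with ⟨k', h'⟩ | ⟨a', h'⟩ <;>
        simp only [Function.comp_apply] at h' <;> exact absurd h' (by simp)
    have := (bas.linearIndependent.disjoint_span_image hd)
    intro x hx hx'
    rw [hV10def, hr10] at hx
    rw [hV01def, hr01] at hx'
    exact Submodule.disjoint_def.mp this x hx hx'
  -- σ basics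
  have hσZb : ∀ k, σ (Zb k) = Z k := fun k => by rw [← hσZ k, hσinv]
  have hσWb : ∀ a, σ (Wb a) = W a := fun a => by rw [← hσW a, hσinv]
  have hσ10 : ∀ x ∈ V10, σ x ∈ V01 := by
    intro x hx
    induction hx using Submodule.span_induction with
    | mem x hx =>
      rcases hx with ⟨k, rfl⟩ | ⟨a, rfl⟩
      · rw [hσZ]; exact hZbmem k
      · rw [hσW]; exact hWbmem a
    | zero => rw [map_zero]; exact zero_mem _
    | add x y hx hy ihx ihy => rw [map_add]; exact add_mem ihx ihy
    | smul c x hx ihx => rw [map_smulₛₗ]; exact Submodule.smul_mem _ _ ihx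
  have hσ01 : ∀ x ∈ V01, σ x ∈ V10 := by
    intro x hx
    induction hx using Submodule.span_induction with
    | mem x hx =>
      rcases hx with ⟨k, rfl⟩ | ⟨a, rfl⟩
      · rw [hσZb]; exact hZmem k
      · rw [hσWb]; exact hWmem a
    | zero => rw [map_zero]; exact zero_mem _
    | add x y hx hy ihx ihy => rw [map_add]; exact add_mem ihx ihy
    | smul c x hx ihx => rw [map_smulₛₗ]; exact Submodule.smul_mem _ _ ihx
  -- uniqueness of the decomposition
  have huniq : ∀ v a b, a ∈ V10 → b ∈ V01 → v = a + b → p10 v = a ∧ p01 v = b := by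
    intro v a b ha hb hv
    obtain ⟨h1, h2, h3⟩ := hp v
    have key : p10 v - a = b - p01 v := by
      have : p10 v + p01 v = a + b := by rw [h3, hv]
      rw [sub_eq_sub_iff_add_eq_add]
      linear_combination (norm := abel) this
    have hz : p10 v - a = 0 := hdisj _ (sub_mem h1 ha) (key ▸ sub_mem hb h2)
    have hz2 : b - p01 v = 0 := key ▸ hz
    exact ⟨sub_eq_zero.mp hz, (sub_eq_zero.mp hz2).symm⟩
  -- antisymmetry of ω
  have hωanti : ∀ x y : L, ω x y = -ω y x := by
    intro x y
    have h0 := hωalt (x + y)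
    simp only [map_add, LinearMap.add_apply, hωalt] at h0
    linear_combination h0
  -- bracket stability lemmas
  have hWbV10 : ∀ x ∈ Submodule.span ℂ (Set.range Wb), ∀ y ∈ V10,
      ⁅x, y⁆ ∈ Submodule.span ℂ (Set.range Wb) := by
    have hgen : ∀ b : Fin s, ∀ y ∈ V10, ⁅Wb b, y⁆ ∈ Submodule.span ℂ (Set.range Wb) := by
      intro b y hy
      induction hy using Submodule.span_induction with
      | mem y hy =>
        rcases hy with ⟨k, rfl⟩ | ⟨a, rfl⟩
        · have : ⁅Wb b, Z k⁆ = -(lam b k • Wb b) := by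
            rw [← lie_skew, hZWb]
          rw [this]
          exact neg_mem (Submodule.smul_mem _ _ (Submodule.subset_span ⟨b, rfl⟩))
        · have : ⁅Wb b, W a⁆ = 0 :=
            hJabel _ (Submodule.subset_span (Or.inr ⟨b, rfl⟩)) _
              (Submodule.subset_span (Or.inl ⟨a, rfl⟩))
          rw [this]; exact zero_mem _
      | zero => rw [lie_zero]; exact zero_mem _
      | add y z hy hz ihy ihz => rw [lie_add]; exact add_mem ihy ihz
      | smul c y hy ihy => rw [lie_smul]; exact Submodule.smul_mem _ _ ihy
    intro x hx
    induction hx using Submodule.span_induction with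
    | mem x hx => obtain ⟨b, rfl⟩ := hx; exact hgen b
    | zero => intro y hy; rw [zero_lie]; exact zero_mem _
    | add x z hx hz ihx ihz => intro y hy; rw [add_lie]; exact add_mem (ihx y hy) (ihz y hy)
    | smul c x hx ihx => intro y hy; rw [smul_lie]; exact Submodule.smul_mem _ _ (ihx y hy)
  have hWV01 : ∀ x ∈ Submodule.span ℂ (Set.range W), ∀ y ∈ V01,
      ⁅x, y⁆ ∈ Submodule.span ℂ (Set.range W) := by
    have hgen : ∀ b : Fin s, ∀ y ∈ V01, ⁅W b, y⁆ ∈ Submodule.span ℂ (Set.range W) := by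
      intro b y hy
      induction hy using Submodule.span_induction with
      | mem y hy =>
        rcases hy with ⟨k, rfl⟩ | ⟨a, rfl⟩
        · have : ⁅W b, Zb k⁆ = -((starRingEnd ℂ) (lam b k) • W b) := by
            rw [← lie_skew, hZbW]
          rw [this]
          exact neg_mem (Submodule.smul_mem _ _ (Submodule.subset_span ⟨b, rfl⟩))
        · have : ⁅W b, Wb a⁆ = 0 :=
            hJabel _ (Submodule.subset_span (Or.inl ⟨b, rfl⟩)) _
              (Submodule.subset_span (Or.inr ⟨a, rfl⟩))
          rw [this]; exact zero_mem _
      | zero => rw [lie_zero]; exact zero_mem _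
      | add y z hy hz ihy ihz => rw [lie_add]; exact add_mem ihy ihz
      | smul c y hy ihy => rw [lie_smul]; exact Submodule.smul_mem _ _ ihy
    intro x hx
    induction hx using Submodule.span_induction with
    | mem x hx => obtain ⟨b, rfl⟩ := hx; exact hgen b
    | zero => intro y hy; rw [zero_lie]; exact zero_mem _
    | add x z hx hz ihx ihz => intro y hy; rw [add_lie]; exact add_mem (ihx y hy) (ihz y hy)
    | smul c x hx ihx => intro y hy; rw [smul_lie]; exact Submodule.smul_mem _ _ (ihx y hy)
  have hWle : Submodule.span ℂ (Set.range W) ≤ V10 :=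
    Submodule.span_mono Set.subset_union_right
  have hWble : Submodule.span ℂ (Set.range Wb) ≤ V01 :=
    Submodule.span_mono Set.subset_union_right
  refine ⟨?_, ?_, ?_⟩
  · -- Part 1 : vanishing on 𝔍
    intro X Y hmem
    have hbr : ⁅X, Y⁆ ∈ J := by
      rcases hmem with hX | hY
      · rw [← lie_skew]; exact neg_mem (hJideal Y X hX)
      · exact hJideal X Y hY
    rw [hJdef, Submodule.span_union, Submodule.mem_sup] at hbr
    obtain ⟨u, hu, v, hv, huv⟩ := hbr
    obtain ⟨hu10, hv01⟩ := huniq ⁅X, Y⁆ u v (hWle hu) (hWble hv) huv.symm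
    rw [hρ, hu10, hv01]
    rw [show (0 : ℂ) = -(∑ _a : Fin n, (0 + 0 : ℂ)) by simp]
    congr 1
    refine Finset.sum_congr rfl fun a _ => ?_
    congr 1
    · exact hω01 _ (hWble (hWbV10 v hv _ (hXmem a))) _ (hσ10 _ (hXmem a))
    · exact hω10 _ (hWle (hWV01 u hu _ (hσ10 _ (hXmem a)))) _ (hXmem a)
  · -- Part 2 : off-diagonal
    intro i j hij
    have hz : ⁅Z i, Zb j⁆ = 0 := by rw [hZZb, if_neg hij]
    obtain ⟨h10, h01⟩ := huniq (⁅Z i, Zb j⁆) 0 0 (zero_mem _) (zero_mem _) (by rw [hz, add_zero])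
    rw [hρ, h10, h01]
    simp
  · -- Part 3 : the diagonal values
    intro i
    -- the linear maps T (the (1,0)-part of ad(Zb i) on V10) and T' (the (0,1)-part)
    set T : L →ₗ[ℂ] L := bas.constr ℂ
      (Sum.elim (Sum.elim (fun k => if k = i then ((I:ℂ)/2) • Z i else 0) (fun _ => 0))
        (Sum.elim (fun a => (starRingEnd ℂ) (lam a i) • W a) (fun _ => 0))) with hTdef
    set T' : L →ₗ[ℂ] L := bas.constr ℂ
      (Sum.elim (Sum.elim (fun k => if k = i then ((I:ℂ)/2) • Zb i else 0) (fun _ => 0))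
        (Sum.elim (fun _ => 0) (fun _ => 0))) with hT'def
    have hTZ : ∀ k, T (Z k) = if k = i then ((I:ℂ)/2) • Z i else 0 := by
      intro k; rw [hZ k, hTdef, Module.Basis.constr_basis]; simp
    have hTZb : ∀ k, T (Zb k) = 0 := by
      intro k; rw [hZb k, hTdef, Module.Basis.constr_basis]; simp
    have hTW : ∀ a, T (W a) = (starRingEnd ℂ) (lam a i) • W a := by
      intro a
      conv_lhs => rw [hW a]
      rw [hTdef, Module.Basis.constr_basis]
      simp
    have hTWb : ∀ a, T (Wb a) = 0 := by
      intro a; rw [hWb a, hTdef, Module.Basis.constr_basis]; simp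
    have hT'Z : ∀ k, T' (Z k) = if k = i then ((I:ℂ)/2) • Zb i else 0 := by
      intro k; rw [hZ k, hT'def, Module.Basis.constr_basis]; simp
    have hT'W : ∀ a, T' (W a) = 0 := by
      intro a; rw [hW a, hT'def, Module.Basis.constr_basis]; simp
    -- the decomposition of ad(Zb i) on V10
    have hdecomp : ∀ x ∈ V10, ⁅Zb i, x⁆ = T x + T' x ∧ T x ∈ V10 ∧ T' x ∈ V01 := by
      intro x hx
      induction hx using Submodule.span_induction with
      | mem x hx =>
        rcases hx with ⟨k, rfl⟩ | ⟨a, rfl⟩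
        · refine ⟨?_, ?_, ?_⟩
          · rw [hTZ, hT'Z, ← lie_skew, hZZb]
            by_cases hk : k = i
            · subst hk; rw [if_pos rfl, if_pos rfl, if_pos rfl]
              rw [smul_add]; module
            · rw [if_neg hk, if_neg hk, if_neg hk]; simp
          · rw [hTZ]; split
            · exact Submodule.smul_mem _ _ (hZmem i)
            · exact zero_mem _
          · rw [hT'Z]; split
            · exact Submodule.smul_mem _ _ (hZbmem i)
            · exact zero_mem _
        · refine ⟨?_, ?_, ?_⟩
          · rw [hTW, hT'W, hZbW, add_zero]
          · rw [hTW]; exact Submodule.smul_mem _ _ (hWmem a)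
          · rw [hT'W]; exact zero_mem _
      | zero => simp
      | add x y hx hy ihx ihy =>
        obtain ⟨e1, e2, e3⟩ := ihx; obtain ⟨f1, f2, f3⟩ := ihy
        refine ⟨?_, ?_, ?_⟩
        · rw [lie_add, e1, f1, map_add, map_add]; abel
        · rw [map_add]; exact add_mem e2 f2
        · rw [map_add]; exact add_mem e3 f3
      | smul c x hx ihx =>
        obtain ⟨e1, e2, e3⟩ := ihx
        refine ⟨?_, ?_, ?_⟩
        · rw [lie_smul, e1, map_smul, map_smul, smul_add]
        · rw [map_smul]; exact Submodule.smul_mem _ _ e2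
        · rw [map_smul]; exact Submodule.smul_mem _ _ e3
    -- T vanishes on V01
    have hTV01 : ∀ x ∈ V01, T x = 0 := by
      intro x hx
      induction hx using Submodule.span_induction with
      | mem x hx =>
        rcases hx with ⟨k, rfl⟩ | ⟨a, rfl⟩
        · exact hTZb k
        · exact hTWb a
      | zero => simp
      | add x y hx hy ihx ihy => rw [map_add, ihx, ihy, add_zero]
      | smul c x hx ihx => rw [map_smul, ihx, smul_zero]
    -- the coefficients
    set c : Fin n → ℂ := fun a => h (T (Xf a)) (Xf a) with hcdef
    -- the two summand evaluations
    have ht1 : ∀ a : Fin n, ω ⁅Zb i, Xf a⁆ (σ (Xf a)) = I * c a := by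
      intro a
      obtain ⟨e1, e2, e3⟩ := hdecomp (Xf a) (hXmem a)
      rw [e1, map_add, LinearMap.add_apply,
        hω01 _ e3 _ (hσ10 _ (hXmem a)), add_zero, hωh _ e2 _ (hXmem a)]
    have ht2 : ∀ a : Fin n, ω ⁅Z i, σ (Xf a)⁆ (Xf a) = -(I * (starRingEnd ℂ) (c a)) := by
      intro a
      obtain ⟨e1, e2, e3⟩ := hdecomp (Xf a) (hXmem a)
      have hbr : ⁅Z i, σ (Xf a)⁆ = σ (T (Xf a)) + σ (T' (Xf a)) := by
        rw [← hσZb i, ← hσbr, e1, map_add]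
      rw [hbr, map_add, LinearMap.add_apply, hω10 _ (hσ01 _ e3) _ (hXmem a), add_zero,
        hωanti, hωh _ (hXmem a) _ e2, hherm _ (hXmem a) _ e2]
    -- the trace of T in the basis `bas`
    have htr1 : LinearMap.trace ℂ L T = I/2 + ∑ a, (starRingEnd ℂ) (lam a i) := by
      rw [LinearMap.trace_eq_matrix_trace ℂ bas T, Matrix.trace]
      simp only [Matrix.diag, LinearMap.toMatrix_apply, Fintype.sum_sum_type]
      have d1 : ∀ k : Fin r, (bas.repr (T (bas (Sum.inl (Sum.inl k))))) (Sum.inl (Sum.inl k)) =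
          if k = i then (I:ℂ)/2 else 0 := by
        intro k
        rw [← hZ k, hTZ]
        by_cases hk : k = i
        · subst hk; rw [if_pos rfl, if_pos rfl, hZ, map_smul, Module.Basis.repr_self]
          simp
        · rw [if_neg hk, if_neg hk, map_zero]; simp
      have d2 : ∀ k : Fin r, (bas.repr (T (bas (Sum.inl (Sum.inr k))))) (Sum.inl (Sum.inr k)) = 0 := by
        intro k; rw [← hZb k, hTZb, map_zero]; simp
      have d3 : ∀ a : Fin s, (bas.repr (T (bas (Sum.inr (Sum.inl a))))) (Sum.inr (Sum.inl a)) =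
          (starRingEnd ℂ) (lam a i) := by
        intro a; rw [← hW a, hTW, hW, map_smul, Module.Basis.repr_self]; simp
      have d4 : ∀ a : Fin s, (bas.repr (T (bas (Sum.inr (Sum.inr a))))) (Sum.inr (Sum.inr a)) = 0 := by
        intro a; rw [← hWb a, hTWb, map_zero]; simp
      rw [Finset.sum_congr rfl (fun k _ => d1 k), Finset.sum_congr rfl (fun k _ => d2 k),
        Finset.sum_congr rfl (fun a _ => d3 a), Finset.sum_congr rfl (fun a _ => d4 a)]
      simp [Finset.sum_ite_eq']
    -- the basis made of the Xf's and their conjugates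
    have hXli : LinearIndependent ℂ Xf := by
      rw [linearIndependent_iff']
      intro t g0 hsum a ha
      have key := congrArg (fun x : L => (h x) (Xf a)) hsum
      simp only [map_sum, map_smul, LinearMap.sum_apply, LinearMap.smul_apply,
        smul_eq_mul, hXon, map_zero, LinearMap.zero_apply, mul_ite, mul_one, mul_zero] at key
      rwa [Finset.sum_ite_eq' t a g0, if_pos ha] at key
    have hσXli : LinearIndependent ℂ (fun a => σ (Xf a)) := by
      rw [linearIndependent_iff']
      intro t g0 hsum a ha
      have key : σ (∑ j ∈ t, (starRingEnd ℂ) (g0 j) • Xf j) = 0 := by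
        rw [map_sum]
        simp only [map_smulₛₗ, Complex.conj_conj]
        exact hsum
      have key2 : ∑ j ∈ t, (starRingEnd ℂ) (g0 j) • Xf j = 0 := by
        have := congrArg σ key
        rwa [hσinv, map_zero] at this
      have := linearIndependent_iff'.mp hXli t _ key2 a ha
      simpa using congrArg (starRingEnd ℂ) this
    have hdisj2 : Disjoint (Submodule.span ℂ (Set.range Xf))
        (Submodule.span ℂ (Set.range fun a => σ (Xf a))) := by
      rw [Submodule.disjoint_def]
      intro x hx hx'
      refine hdisj x (hXspan ▸ hx) (Submodule.span_le.mpr ?_ hx')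
      rintro _ ⟨a, rfl⟩
      exact hσ10 _ (hXmem a)
    have hli : LinearIndependent ℂ (Sum.elim Xf (fun a => σ (Xf a))) :=
      hXli.sum_type hσXli hdisj2
    have hσsp : ∀ x ∈ Submodule.span ℂ (Set.range Xf),
        σ x ∈ Submodule.span ℂ (Set.range fun a => σ (Xf a)) := by
      intro x hx
      induction hx using Submodule.span_induction with
      | mem x hx => obtain ⟨a, rfl⟩ := hx; exact Submodule.subset_span ⟨a, rfl⟩
      | zero => rw [map_zero]; exact zero_mem _
      | add x y hx hy ihx ihy => rw [map_add]; exact add_mem ihx ihy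
      | smul cc x hx ihx => rw [map_smulₛₗ]; exact Submodule.smul_mem _ _ ihx
    have hspan2 : ⊤ ≤ Submodule.span ℂ (Set.range (Sum.elim Xf (fun a => σ (Xf a)))) := by
      rw [Set.Sum.elim_range, Submodule.span_union]
      rw [← bas.span_eq]
      refine Submodule.span_le.mpr ?_
      rintro _ ⟨j, rfl⟩
      rcases j with (k | k) | (a | a)
      · exact Submodule.mem_sup_left (hXspan ▸ (hZ k ▸ hZmem k : bas (Sum.inl (Sum.inl k)) ∈ V10))
      · refine Submodule.mem_sup_right ?_
        have : bas (Sum.inl (Sum.inr k)) = σ (Z k) := by rw [hσZ, hZb]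
        rw [this]
        exact hσsp _ (hXspan ▸ hZmem k)
      · exact Submodule.mem_sup_left (hXspan ▸ (hW a ▸ hWmem a : bas (Sum.inr (Sum.inl a)) ∈ V10))
      · refine Submodule.mem_sup_right ?_
        have : bas (Sum.inr (Sum.inr a)) = σ (W a) := by rw [hσW, hWb]
        rw [this]
        exact hσsp _ (hXspan ▸ hWmem a)
    set b2 : Module.Basis (Fin n ⊕ Fin n) ℂ L := Module.Basis.mk hli hspan2 with hb2def
    -- orthonormal expansion
    have hexp : ∀ x ∈ V10, x = ∑ b, (h x) (Xf b) • Xf b := by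
      intro x hx
      set y := x - ∑ b, (h x) (Xf b) • Xf b with hy
      have hymem : y ∈ V10 :=
        sub_mem hx (Submodule.sum_mem _ fun b _ => Submodule.smul_mem _ _ (hXmem b))
      have hyX : ∀ cc : Fin n, (h y) (Xf cc) = 0 := by
        intro cc
        rw [hy, map_sub, LinearMap.sub_apply, map_sum, LinearMap.sum_apply]
        simp only [map_smul, LinearMap.smul_apply, smul_eq_mul, hXon, mul_ite, mul_one, mul_zero]
        rw [Finset.sum_ite_eq' Finset.univ cc, if_pos (Finset.mem_univ cc), sub_self]
      have hyV : ∀ z ∈ V10, (h y) z = 0 := by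
        rw [← hXspan]
        intro z hz
        induction hz using Submodule.span_induction with
        | mem z hz => obtain ⟨cc, rfl⟩ := hz; exact hyX cc
        | zero => rw [map_zero]
        | add z w hz hw ihz ihw => rw [map_add, ihz, ihw, add_zero]
        | smul cc z hz ihz => rw [map_smulₛₗ, ihz, smul_zero]
      have hy0 : y = 0 := by
        by_contra hne
        have := hposdef y hymem hne
        rw [hyV y hymem] at this
        simp at this
      rw [hy] at hy0
      linear_combination (norm := module) hy0
    -- the trace of T in the basis b2
    have htr2 : LinearMap.trace ℂ L T = ∑ a, c a := by
      rw [LinearMap.trace_eq_matrix_trace ℂ b2 T, Matrix.trace]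
      simp only [Matrix.diag, LinearMap.toMatrix_apply, Fintype.sum_sum_type, hb2def,
        Module.Basis.mk_apply, Sum.elim_inl, Sum.elim_inr]
      have hinr : ∀ a : Fin n,
          ((Module.Basis.mk hli hspan2).repr (T (σ (Xf a)))) (Sum.inr a) = 0 := by
        intro a
        rw [hTV01 _ (hσ10 _ (hXmem a)), map_zero]
        simp
      have hinl : ∀ a : Fin n,
          ((Module.Basis.mk hli hspan2).repr (T (Xf a))) (Sum.inl a) = c a := by
        intro a
        have hTmem := (hdecomp (Xf a) (hXmem a)).2.1
        conv_lhs => rw [hexp (T (Xf a)) hTmem]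
        rw [map_sum, Finsupp.finset_sum_apply]
        have hterm : ∀ b : Fin n,
            ((Module.Basis.mk hli hspan2).repr ((h (T (Xf a))) (Xf b) • Xf b)) (Sum.inl a) =
            if b = a then c a else 0 := by
          intro b
          have hXb : Xf b = (Module.Basis.mk hli hspan2) (Sum.inl b) := by
            rw [Module.Basis.mk_apply, Sum.elim_inl]
          have hrep : ((Module.Basis.mk hli hspan2).repr (Xf b)) (Sum.inl a) =
              if b = a then 1 else 0 := by
            conv_lhs => rw [hXb]
            rw [Module.Basis.repr_self, Finsupp.single_apply]
            simp [Sum.inl.injEq]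
          rw [map_smul, Finsupp.smul_apply, hrep, smul_eq_mul, mul_ite, mul_one, mul_zero]
          by_cases hb : b = a
          · subst hb; simp [hcdef]
          · simp [hb]
        rw [Finset.sum_congr rfl (fun b _ => hterm b), Finset.sum_ite_eq' Finset.univ a,
          if_pos (Finset.mem_univ a)]
      rw [Finset.sum_congr rfl (fun a _ => hinl a), Finset.sum_congr rfl (fun a _ => hinr a)]
      simp
    -- value of the trace sum
    have hS : ∑ a, c a = I/2 + ∑ a, (starRingEnd ℂ) (lam a i) := by rw [← htr2, htr1]
    have hSc : ∑ a, (starRingEnd ℂ) (c a) = -(I/2) + ∑ a, lam a i := by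
      have h1 := congrArg (starRingEnd ℂ) hS
      rw [map_sum] at h1
      rw [h1, map_add, map_sum]
      congr 1
      · rw [map_div₀, Complex.conj_I]
        simp [neg_div, Complex.conj_ofNat]
      · exact Finset.sum_congr rfl fun a _ => Complex.conj_conj _
    have hconjlam : ∑ a, (starRingEnd ℂ) (lam a i) =
        (∑ a, lam a i) - 2 * ((∑ a, (lam a i).im : ℝ) : ℂ) * I := by
      have e1 : ∀ a : Fin s, (starRingEnd ℂ) (lam a i) =
          lam a i - 2 * ((lam a i).im : ℂ) * I := fun a => by
        have h2 := Complex.sub_conj (lam a i)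
        push_cast at h2
        linear_combination - h2
      rw [Finset.sum_congr rfl fun a _ => e1 a, Finset.sum_sub_distrib]
      congr 1
      push_cast
      rw [Finset.mul_sum, Finset.sum_mul]
    -- the final computation
    have hval : ⁅Z i, Zb i⁆ = (-(I/2) : ℂ) • Z i + (-(I/2) : ℂ) • Zb i := by
      rw [hZZb, if_pos rfl]; module
    obtain ⟨h10, h01⟩ := huniq (⁅Z i, Zb i⁆) ((-(I/2) : ℂ) • Z i) ((-(I/2) : ℂ) • Zb i)
      (Submodule.smul_mem _ _ (hZmem i)) (Submodule.smul_mem _ _ (hZbmem i)) hval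
    rw [hρ, h10, h01]
    have hterm : ∀ a : Fin n,
        (ω ⁅(-(I/2) : ℂ) • Zb i, Xf a⁆) (σ (Xf a)) + (ω ⁅(-(I/2) : ℂ) • Z i, σ (Xf a)⁆) (Xf a) =
        (-(I/2)) * (I * c a) + (-(I/2)) * (-(I * (starRingEnd ℂ) (c a))) := by
      intro a
      rw [smul_lie, smul_lie, map_smul, map_smul, LinearMap.smul_apply, LinearMap.smul_apply,
        ht1 a, ht2 a, smul_eq_mul, smul_eq_mul]
    rw [Finset.sum_congr rfl (fun a _ => hterm a), Finset.sum_add_distrib,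
      ← Finset.mul_sum, ← Finset.mul_sum, Finset.mul_sum]
    rw [show ∀ x : Fin n → ℂ, (∑ a, -(I/2) * -(I * (starRingEnd ℂ) (x a))) =
      (I/2) * (I * ∑ a, (starRingEnd ℂ) (x a)) from fun x => by
        rw [Finset.mul_sum, Finset.mul_sum]; exact Finset.sum_congr rfl fun a _ => by ring]
    rw [← Finset.mul_sum, hS, hSc, hconjlam]
    set B : ℂ := ((∑ a, (lam a i).im : ℝ) : ℂ)
    set A : ℂ := ∑ a, lam a i
    linear_combination ((1 - 2*B) * (I/2)) * Complex.I_sq
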